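/- Let G be a finite group, and let X = [x] and Y = [y] be two distinct classes of the relation ⟨a⟩ = ⟨b⟩ such that some element of each class is a power of an element of the other joined pair (the classes are joined in the directed power graph) and |X| > |Y|. Then every element of Y is a power of every element of X. -/
import Mathlib

open Subgroup

lemma card_gens {G : Type*} [Group G] [Finite G] (x : G) :
    {z : G | Subgroup.zpowers z = Subgroup.zpowers x}.ncard = (orderOf x).totient := by
  classical
  have hfin := Fintype.ofFinite G
  have hset : {z : G | zpowers z = zpowers x} =
      (fun w : zpowers x => (w : G)) '' {w : zpowers x | orderOf w = orderOf x} := by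
    ext z
    simp only [Set.mem_setOf_eq, Set.mem_image]
    constructor
    · intro h
      refine ⟨⟨z, h ▸ mem_zpowers z⟩, ?_, rfl⟩
      show orderOf (⟨z, _⟩ : zpowers x) = orderOf x
      rw [Subgroup.orderOf_mk, ← Nat.card_zpowers, ← Nat.card_zpowers, h]
    · rintro ⟨⟨w, hw⟩, hord, rfl⟩
      rw [Subgroup.orderOf_mk] at hord
      have hle : zpowers w ≤ zpowers x := (zpowers_le).2 hw
      exact SetLike.ext' (Set.eq_of_subset_of_ncard_le hle (by
        rw [← Nat.card_coe_set_eq, ← Nat.card_coe_set_eq]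
        show Nat.card (zpowers x) ≤ Nat.card (zpowers w)
        rw [Nat.card_zpowers, Nat.card_zpowers, hord]) (Set.toFinite _))
  rw [hset, Set.ncard_image_of_injective _ Subtype.val_injective]
  have hcz : Nat.card (zpowers x) = orderOf x := Nat.card_zpowers x
  haveI : IsCyclic (zpowers x) := isCyclic_of_orderOf_eq_card ⟨x, mem_zpowers x⟩
    (by rw [Subgroup.orderOf_mk, ← Nat.card_zpowers])
  have hdvd : orderOf x ∣ Fintype.card (zpowers x) := by
    rw [← Nat.card_eq_fintype_card, hcz]
  have := IsCyclic.card_orderOf_eq_totient (α := zpowers x) hdvd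
  rw [← this, Set.ncard_eq_toFinset_card', Set.toFinset_setOf]

theorem diamond_classes_bigger_dominates {G : Type*} [Group G] [Finite G]
    (x y : G) (hXY : Subgroup.zpowers x ≠ Subgroup.zpowers y)
    (hjoin : ∃ a b : G, Subgroup.zpowers a = Subgroup.zpowers x ∧
      Subgroup.zpowers b = Subgroup.zpowers y ∧
        ∃ m : ℕ, 0 < m ∧ (a = b ^ m ∨ b = a ^ m))
    (hcard : {z : G | Subgroup.zpowers z = Subgroup.zpowers y}.ncard <
      {z : G | Subgroup.zpowers z = Subgroup.zpowers x}.ncard) :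
    ∀ a b : G, Subgroup.zpowers a = Subgroup.zpowers x →
      Subgroup.zpowers b = Subgroup.zpowers y →
        ∃ m : ℕ, 0 < m ∧ b = a ^ m := by
  rw [card_gens, card_gens] at hcard
  obtain ⟨a', b', ha', hb', m, hm, hcase⟩ := hjoin
  intro a b ha hb
  rcases hcase with h | h
  · -- a' = b'^m, so ⟨x⟩ ≤ ⟨y⟩, contradiction with totient inequality
    exfalso
    have hle : zpowers x ≤ zpowers y := by
      rw [← ha', ← hb']
      exact zpowers_le.2 (h ▸ pow_mem (mem_zpowers b') m)
    have hdvd : orderOf x ∣ orderOf y :=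
      orderOf_dvd_of_mem_zpowers (hle (mem_zpowers x))
    have := Nat.le_of_dvd (Nat.totient_pos.2 (orderOf_pos y))
      (Nat.totient_dvd_of_dvd hdvd)
    omega
  · -- b' = a'^m, so ⟨y⟩ ≤ ⟨x⟩
    have hle : zpowers y ≤ zpowers x := by
      rw [← ha', ← hb']
      exact zpowers_le.2 (h ▸ pow_mem (mem_zpowers a') m)
    have hbmem : b ∈ zpowers a := by
      rw [ha]
      exact hle (hb ▸ mem_zpowers b)
    rw [← mem_powers_iff_mem_zpowers] at hbmem
    obtain ⟨n, hn⟩ := hbmem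
    simp only at hn
    exact ⟨n + orderOf a, Nat.add_pos_right n (orderOf_pos a), by
      rw [pow_add, pow_orderOf_eq_one, mul_one, hn]⟩
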